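/- For every N ≥ 2 there is a constant C_N depending only on N with the following property. Let F(X,Y) = Σ_{i,j=1}^N f_{ij} X_i Y_j be a symmetric bilinear form over ℚ with associated quadratic form F(X) = F(X,X). If there exists a nonsingular zero of F over ℚ, i.e., a point x ∈ ℚ^N with F(x) = 0 and F(x, y) ≠ 0 for some y ∈ ℚ^N, then there exists such a nonsingular zero x with H(x) ≤ C_N · H(F)^{(N−1)/2}. -/

import Mathlib

/-- Projective (homogeneous) height of a rational vector: the sup-norm of a primitive integer
vector proportional to it. -/
noncomputable def projHeight {ι : Type*} [Fintype ι] (x : ι → ℚ) : ℕ :=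
  sInf {m : ℕ | ∃ y : ι → ℤ,
    (∃ c : ℚ, c ≠ 0 ∧ ∀ i, (y i : ℚ) = c * x i) ∧
    Finset.univ.gcd y = 1 ∧ m = Finset.univ.sup fun i => (y i).natAbs}



namespace CasselsAux


variable {ι : Type*} [Fintype ι]

lemma exists_primitive_of_int (w : ι → ℤ) (hw : w ≠ 0) :
    ∃ (y : ι → ℤ) (e : ℚ), e ≠ 0 ∧ (∀ i, (y i : ℚ) = e * (w i : ℚ)) ∧
      Finset.univ.gcd y = 1 ∧ ∀ i, (y i).natAbs ≤ (w i).natAbs := by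
  obtain ⟨i0, hi0⟩ : ∃ i, w i ≠ 0 := by
    by_contra h; push_neg at h; exact hw (funext h)
  set d : ℤ := Finset.univ.gcd w with hd
  have hdvd : ∀ i, d ∣ w i := fun i => Finset.gcd_dvd (Finset.mem_univ i)
  have hdne : d ≠ 0 := by
    intro h
    rw [hd, Finset.gcd_eq_zero_iff] at h
    exact hi0 (h i0 (Finset.mem_univ i0))
  have hdq : (d : ℚ) ≠ 0 := Int.cast_ne_zero.2 hdne
  refine ⟨fun i => w i / d, 1 / (d : ℚ), one_div_ne_zero hdq, fun i => ?_, ?_, fun i => ?_⟩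
  · rw [Int.cast_div (hdvd i) hdq]; ring
  · exact Finset.gcd_div_eq_one (f := w) (Finset.mem_univ i0) hi0
  · rw [Int.natAbs_ediv_of_dvd (hdvd i)]
    exact Nat.div_le_self _ _

lemma projHeight_le_of_int (x : ι → ℚ) (w : ι → ℤ) (c : ℚ) (hc : c ≠ 0)
    (hw : ∀ i, (w i : ℚ) = c * x i) (hw0 : w ≠ 0) :
    projHeight x ≤ Finset.univ.sup fun i => (w i).natAbs := by
  obtain ⟨y, e, he, hye, hgcd, hle⟩ := exists_primitive_of_int w hw0
  have : projHeight x ≤ Finset.univ.sup fun i => (y i).natAbs := by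
    apply Nat.sInf_le
    exact ⟨y, ⟨e * c, mul_ne_zero he hc, fun i => by rw [hye i, hw i, mul_assoc]⟩, hgcd, rfl⟩
  exact this.trans (Finset.sup_mono_fun fun i _ => hle i)

lemma projHeight_spec (x : ι → ℚ) (hx : x ≠ 0) :
    ∃ y : ι → ℤ, (∃ c : ℚ, c ≠ 0 ∧ ∀ i, (y i : ℚ) = c * x i) ∧ Finset.univ.gcd y = 1 ∧
      projHeight x = Finset.univ.sup fun i => (y i).natAbs := by
  have hne : {m : ℕ | ∃ y : ι → ℤ,
      (∃ c : ℚ, c ≠ 0 ∧ ∀ i, (y i : ℚ) = c * x i) ∧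
      Finset.univ.gcd y = 1 ∧ m = Finset.univ.sup fun i => (y i).natAbs}.Nonempty := by
    obtain ⟨i0, hi0⟩ : ∃ i, x i ≠ 0 := by
      by_contra h; push_neg at h; exact hx (funext h)
    set D : ℕ := ∏ i, (x i).den with hD
    have hDpos : 0 < D := Finset.prod_pos fun i _ => (x i).pos
    have hden : ∀ i, ((x i).den : ℤ) ∣ (D : ℤ) := fun i =>
      Int.natCast_dvd_natCast.2 (Finset.dvd_prod_of_mem _ (Finset.mem_univ i))
    set w : ι → ℤ := fun i => (x i).num * ((D : ℤ) / ((x i).den : ℤ)) with hwdef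
    have hw : ∀ i, (w i : ℚ) = (D : ℚ) * x i := by
      intro i
      have hdq : (((x i).den : ℤ) : ℚ) ≠ 0 := by
        exact_mod_cast (Nat.cast_ne_zero (R := ℚ)).2 (x i).den_nz
      have hnum : x i * ((x i).den : ℚ) = ((x i).num : ℚ) := Rat.mul_den_eq_num (x i)
      rw [hwdef]
      push_cast [Int.cast_div (hden i) hdq]
      field_simp
      rw [← hnum]
      ring
    have hw0 : w ≠ 0 := by
      intro h
      have := hw i0
      rw [h] at this
      simp only [Pi.zero_apply, Int.cast_zero] at this
      have : (D : ℚ) * x i0 ≠ 0 :=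
        mul_ne_zero (by exact_mod_cast hDpos.ne') hi0
      simp_all
    obtain ⟨y, e, he, hye, hgcd, _⟩ := exists_primitive_of_int w hw0
    exact ⟨_, y, ⟨e * D, mul_ne_zero he (by exact_mod_cast hDpos.ne'), fun i => by
      rw [hye i, hw i, mul_assoc]⟩, hgcd, rfl⟩
  have := Nat.sInf_mem hne
  obtain ⟨y, hy1, hy2, hy3⟩ := this
  exact ⟨y, hy1, hy2, hy3⟩

lemma one_le_sup_natAbs {y : ι → ℤ} (h : Finset.univ.gcd y = 1) :
    1 ≤ Finset.univ.sup fun i => (y i).natAbs := by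
  obtain ⟨i0, hi0⟩ : ∃ i, y i ≠ 0 := by
    by_contra hc; push_neg at hc
    have : Finset.univ.gcd y = 0 := Finset.gcd_eq_zero_iff.2 fun i _ => hc i
    rw [this] at h; exact absurd h (by norm_num)
  calc 1 ≤ (y i0).natAbs := Int.natAbs_pos.2 hi0
    _ ≤ _ := Finset.le_sup (f := fun i => (y i).natAbs) (Finset.mem_univ i0)



variable {N : ℕ}

def Bq (g : Fin N → Fin N → ℚ) (x y : Fin N → ℚ) : ℚ := ∑ i, ∑ j, g i j * x i * y j

lemma Bq_comm {g : Fin N → Fin N → ℚ} (hg : ∀ i j, g i j = g j i) (x y : Fin N → ℚ) :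
    Bq g x y = Bq g y x := by
  rw [Bq, Finset.sum_comm]
  refine Finset.sum_congr rfl fun j _ => Finset.sum_congr rfl fun i _ => ?_
  rw [hg i j]; ring

lemma Bq_comb_left (g : Fin N → Fin N → ℚ) (c d : ℚ) (x u y : Fin N → ℚ) :
    Bq g (fun i => c * x i + d * u i) y = c * Bq g x y + d * Bq g u y := by
  simp only [Bq, Finset.mul_sum, ← Finset.sum_add_distrib]
  exact Finset.sum_congr rfl fun i _ =>
    Finset.sum_congr rfl fun j _ => by ring

lemma Bq_comb_right (g : Fin N → Fin N → ℚ) (c d : ℚ) (x u y : Fin N → ℚ) :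
    Bq g y (fun i => c * x i + d * u i) = c * Bq g y x + d * Bq g y u := by
  simp only [Bq, Finset.mul_sum, ← Finset.sum_add_distrib]
  exact Finset.sum_congr rfl fun i _ =>
    Finset.sum_congr rfl fun j _ => by ring

lemma Bq_zero_left (g : Fin N → Fin N → ℚ) (y : Fin N → ℚ) : Bq g 0 y = 0 := by
  simp [Bq]

lemma abs_Bq_le {g : Fin N → Fin N → ℚ} {x y : Fin N → ℚ} {Hq X Y : ℚ}
    (hg : ∀ i j, |g i j| ≤ Hq) (hx : ∀ i, |x i| ≤ X) (hy : ∀ j, |y j| ≤ Y)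
    (hH : 0 ≤ Hq) (hX : 0 ≤ X) (hY : 0 ≤ Y) :
    |Bq g x y| ≤ (N : ℚ)^2 * Hq * X * Y := by
  have key : ∀ i j, |g i j * x i * y j| ≤ Hq * X * Y := by
    intro i j
    rw [abs_mul, abs_mul]
    exact mul_le_mul (mul_le_mul (hg i j) (hx i) (abs_nonneg _) hH) (hy j) (abs_nonneg _)
      (by positivity)
  calc |Bq g x y| ≤ ∑ i, |∑ j, g i j * x i * y j| := Finset.abs_sum_le_sum_abs _ _
    _ ≤ ∑ i : Fin N, ∑ j : Fin N, |g i j * x i * y j| :=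
        Finset.sum_le_sum fun i _ => Finset.abs_sum_le_sum_abs _ _
    _ ≤ ∑ _i : Fin N, ∑ _j : Fin N, (Hq * X * Y) :=
        Finset.sum_le_sum fun i _ => Finset.sum_le_sum fun j _ => key i j
    _ = (N : ℚ)^2 * Hq * X * Y := by
        simp [Finset.sum_const, Finset.card_univ]; ring

/-- `x` is a nonsingular integral zero of the integral form `g`. -/
def Szero (g : Fin N → Fin N → ℤ) (x : Fin N → ℤ) : Prop :=
  Bq (fun i j => (g i j : ℚ)) (fun i => (x i : ℚ)) (fun i => (x i : ℚ)) = 0 ∧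
  ∃ y : Fin N → ℚ, Bq (fun i j => (g i j : ℚ)) (fun i => (x i : ℚ)) y ≠ 0


lemma floor_eq_abs_sub_lt {u v : ℚ} (h : ⌊u⌋ = ⌊v⌋) : |u - v| < 1 := by
  have h1 := Int.floor_le u
  have h2 := Int.lt_floor_add_one u
  have h3 := Int.floor_le v
  have h4 := Int.lt_floor_add_one v
  rw [abs_sub_lt_iff]
  constructor <;> rw [h] at * <;> linarith

lemma pigeonhole_approx {N : ℕ} (a : Fin N → ℤ) (i0 : Fin N)
    (K M : ℕ) (hK : 0 < K) (hM : M = K ^ (N - 1)) (hA : a i0 ≠ 0) :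
    ∃ (m : ℕ) (z : Fin N → ℤ), 1 ≤ m ∧ m ≤ M ∧ z i0 = (m : ℤ) ∧
      ∀ i, |(z i : ℚ) - (m : ℚ) / (a i0 : ℚ) * (a i : ℚ)| ≤ 1 / K := by
  classical
  set Aq : ℚ := (a i0 : ℚ) with hAq
  have hAq0 : Aq ≠ 0 := Int.cast_ne_zero.2 hA
  set q : ℕ → Fin N → ℚ := fun m i => (m : ℚ) * ((a i : ℚ) / Aq) with hq
  set F : ℕ → ({i : Fin N // i ≠ i0} → Fin K) := fun m i =>
    ⟨(⌊(K:ℚ) * Int.fract (q m i.1)⌋).toNat, by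
      rw [Int.toNat_lt' hK, Int.floor_lt]
      calc (K:ℚ) * Int.fract (q m i.1) < (K:ℚ) * 1 :=
            (mul_lt_mul_iff_right₀ (by exact_mod_cast hK)).2 (Int.fract_lt_one _)
        _ = ((K:ℤ) : ℚ) := by push_cast; ring⟩ with hF
  have hcard : (Finset.univ : Finset ({i : Fin N // i ≠ i0} → Fin K)).card
      < (Finset.range (M+1)).card := by
    rw [Finset.card_range, Finset.card_univ]
    have h1 : Fintype.card {i : Fin N // i ≠ i0} = N - 1 := by
      simp [Fintype.card_subtype_compl]
    rw [Fintype.card_fun, Fintype.card_fin, h1, ← hM]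
    omega
  obtain ⟨m1, hm1, m2, hm2, hne, heq⟩ :=
    Finset.exists_ne_map_eq_of_card_lt_of_maps_to hcard
      (fun x _ => Finset.mem_univ (F x))
  have main : ∀ m1 m2 : ℕ, m1 ∈ Finset.range (M+1) → m2 ∈ Finset.range (M+1) →
      m1 < m2 → F m1 = F m2 →
      (∃ (m : ℕ) (z : Fin N → ℤ), 1 ≤ m ∧ m ≤ M ∧ z i0 = (m : ℤ) ∧
        ∀ i, |(z i : ℚ) - (m : ℚ) / Aq * (a i : ℚ)| ≤ 1 / K) := by
    intro m1 m2 hm1 hm2 hlt heq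
    set m : ℕ := m2 - m1 with hm
    have hm1le : (m1:ℚ) ≤ m2 := by exact_mod_cast hlt.le
    have hmcast : (m : ℚ) = (m2 : ℚ) - m1 := by
      rw [hm]; push_cast [Nat.cast_sub hlt.le]; ring
    set z : Fin N → ℤ := fun i => if i = i0 then (m : ℤ) else ⌊q m2 i⌋ - ⌊q m1 i⌋ with hz
    refine ⟨m, z, by omega, by simp at hm2; omega, by simp [hz], ?_⟩
    intro i
    by_cases hi : i = i0
    · subst hi
      simp only [hz, if_pos rfl]
      rw [div_mul_cancel₀ _ hAq0]
      simp
    · have hfloor : ⌊(K:ℚ) * Int.fract (q m1 i)⌋ = ⌊(K:ℚ) * Int.fract (q m2 i)⌋ := by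
        have := congrFun heq ⟨i, hi⟩
        simp only [hF, Fin.mk.injEq] at this
        have n1 : 0 ≤ ⌊(K:ℚ) * Int.fract (q m1 i)⌋ :=
          Int.floor_nonneg.2 (mul_nonneg (by positivity) (Int.fract_nonneg _))
        have n2 : 0 ≤ ⌊(K:ℚ) * Int.fract (q m2 i)⌋ :=
          Int.floor_nonneg.2 (mul_nonneg (by positivity) (Int.fract_nonneg _))
        omega
      have habs : |(K:ℚ) * Int.fract (q m1 i) - (K:ℚ) * Int.fract (q m2 i)| < 1 :=
        floor_eq_abs_sub_lt hfloor
      have hKq : (0:ℚ) < (K:ℚ) := by exact_mod_cast hK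
      have habs2 : |Int.fract (q m1 i) - Int.fract (q m2 i)| < 1 / K := by
        rw [lt_div_iff₀ hKq]
        have h' : (K:ℚ) * Int.fract (q m1 i) - (K:ℚ) * Int.fract (q m2 i)
            = (Int.fract (q m1 i) - Int.fract (q m2 i)) * K := by ring
        rw [h', abs_mul, abs_of_pos hKq] at habs
        exact habs
      have hzi : (z i : ℚ) = ⌊q m2 i⌋ - ⌊q m1 i⌋ := by
        simp [hz, if_neg hi]
      have hdiff : (m:ℚ) / Aq * (a i : ℚ) = q m2 i - q m1 i := by
        rw [hq, hmcast]; ring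
      rw [hzi, hdiff]
      have : (((⌊q m2 i⌋ : ℚ) - ⌊q m1 i⌋) - (q m2 i - q m1 i))
          = Int.fract (q m1 i) - Int.fract (q m2 i) := by
        rw [Int.fract, Int.fract]; ring
      rw [this]
      exact habs2.le
  rcases hne.lt_or_gt with hlt | hlt
  · exact main m1 m2 hm1 hm2 hlt heq
  · exact main m2 m1 hm2 hm1 hlt heq.symm

lemma bezout_small (A m : ℤ) (hA : A ≠ 0) (hm : 0 < m) :
    ∃ p q : ℤ, p ≠ 0 ∧ p * A + q * m = Int.gcd A m ∧ |q| ≤ 2 * |A| := by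
  set d : ℤ := (Int.gcd A m : ℤ) with hd
  have hd0 : 0 < d := by
    rw [hd]
    exact_mod_cast Int.gcd_pos_of_ne_zero_left m hA
  obtain ⟨A', hA'⟩ : d ∣ A := Int.gcd_dvd_left _ _
  obtain ⟨m', hm'⟩ : d ∣ m := Int.gcd_dvd_right _ _
  have hA'0 : A' ≠ 0 := by rintro rfl; simp at hA'; exact hA (by omega)
  have hAA' : |A'| ≤ |A| := by
    rw [hA', abs_mul]
    nlinarith [abs_nonneg A', abs_of_pos hd0]
  have hm'0 : 0 < m' := by nlinarith [hm, hd0]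
  set p0 : ℤ := Int.gcdA A m with hp0
  set q0 : ℤ := Int.gcdB A m with hq0
  have hG : d = A * p0 + m * q0 := Int.gcd_eq_gcd_ab A m
  set q1 : ℤ := q0 % |A'| with hq1
  have hB : (0:ℤ) < |A'| := abs_pos.2 hA'0
  have hq1nn : 0 ≤ q1 := Int.emod_nonneg q0 (abs_ne_zero.2 hA'0)
  have hq1lt : q1 < |A'| := Int.emod_lt_of_pos q0 hB
  obtain ⟨t, ht⟩ : A' ∣ (q0 - q1) := by
    rw [← abs_dvd]
    exact Int.dvd_self_sub_of_emod_eq rfl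
  set p1 : ℤ := p0 + t * m' with hp1
  have key : p1 * A + q1 * m = d := by
    rw [hp1]
    linear_combination -hG - m * ht - (A' * t) * hm' + (t * m') * hA'
  by_cases hp : p1 = 0
  · refine ⟨m', q1 - A', hm'0.ne', ?_, ?_⟩
    · rw [hp, zero_mul, zero_add] at key
      linear_combination key - A' * hm' + m' * hA'
    · have : |q1 - A'| ≤ |q1| + |A'| := abs_sub _ _
      rw [abs_of_nonneg hq1nn] at this
      linarith
  · exact ⟨p1, q1, hp, key, by rw [abs_of_nonneg hq1nn]; linarith⟩



lemma Bq_smul_left (g : Fin N → Fin N → ℚ) (c : ℚ) (x y : Fin N → ℚ) :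
    Bq g (fun i => c * x i) y = c * Bq g x y := by
  simp only [Bq, Finset.mul_sum]
  exact Finset.sum_congr rfl fun i _ =>
    Finset.sum_congr rfl fun j _ => by ring

lemma Bq_smul_right (g : Fin N → Fin N → ℚ) (c : ℚ) (x y : Fin N → ℚ) :
    Bq g y (fun i => c * x i) = c * Bq g y x := by
  simp only [Bq, Finset.mul_sum]
  exact Finset.sum_congr rfl fun i _ =>
    Finset.sum_congr rfl fun j _ => by ring

lemma natAbsQ (n : ℤ) : ((n.natAbs : ℕ) : ℚ) = |(n:ℚ)| := by
  rw [Nat.cast_natAbs]; push_cast; ring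


set_option maxHeartbeats 4000000 in
lemma descent {N : ℕ} (hN : 2 ≤ N) (g : Fin N → Fin N → ℤ)
    (hsym : ∀ i j, g i j = g j i) (H : ℕ) (hH1 : 1 ≤ H)
    (hgH : ∀ i j, (g i j).natAbs ≤ H)
    (hS : ∃ x : Fin N → ℤ, Szero g x) :
    ∃ a : Fin N → ℤ, Szero g a ∧
      (Finset.univ.sup fun i => (a i).natAbs) ≤ 2 * (2*N*(Nat.sqrt H + 1))^(N-1) + 3 := by
  classical
  haveI : Nonempty (Fin N) := ⟨⟨0, by omega⟩⟩
  set K : ℕ := 2*N*(Nat.sqrt H + 1) with hK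
  set M : ℕ := K^(N-1) with hM
  set gq : Fin N → Fin N → ℚ := fun i j => (g i j : ℚ) with hgq
  set T : Set ℕ := {k : ℕ | ∃ x : Fin N → ℤ, Szero g x ∧
    (Finset.univ.sup fun i => (x i).natAbs) = k} with hT
  have hTne : T.Nonempty := by
    obtain ⟨x, hx⟩ := hS
    exact ⟨_, x, hx, rfl⟩
  set h : ℕ := sInf T with hh
  obtain ⟨a0, ha0, ha0h⟩ : ∃ x : Fin N → ℤ, Szero g x ∧
      (Finset.univ.sup fun i => (x i).natAbs) = h := Nat.sInf_mem hTne
  have hmin : ∀ x : Fin N → ℤ, Szero g x → h ≤ Finset.univ.sup fun i => (x i).natAbs :=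
    fun x hx => Nat.sInf_le ⟨x, hx, rfl⟩
  -- pass to a primitive minimal zero
  obtain ⟨a, ha, hah, hprim⟩ : ∃ a : Fin N → ℤ, Szero g a ∧
      (Finset.univ.sup fun i => (a i).natAbs) = h ∧ Finset.univ.gcd a = 1 := by
    have ha00 : a0 ≠ 0 := by
      rintro rfl
      obtain ⟨y, hy⟩ := ha0.2
      apply hy
      have : (fun i => ((0:Fin N → ℤ) i : ℚ)) = (0 : Fin N → ℚ) := by
        funext i; simp
      rw [this, Bq_zero_left]
    obtain ⟨y, e, he, hye, hgcd, hle⟩ := exists_primitive_of_int a0 ha00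
    have hyc : (fun i => (y i : ℚ)) = fun i => e * (a0 i : ℚ) := funext fun i => hye i
    have hSy : Szero g y := by
      constructor
      · rw [hyc, Bq_smul_left, Bq_smul_right, ha0.1]
        ring
      · obtain ⟨w, hw⟩ := ha0.2
        exact ⟨w, by
          rw [hyc, Bq_smul_left]
          exact mul_ne_zero he hw⟩
    refine ⟨y, hSy, le_antisymm ?_ (hmin y hSy), hgcd⟩
    · rw [← ha0h]
      exact Finset.sup_mono_fun fun i _ => hle i
  suffices hcon : h ≤ 2*M + 3 by
    exact ⟨a, ha, by omega⟩
  by_contra hcon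
  push_neg at hcon
  have hcon' : 2*M + 4 ≤ h := hcon
  -- numeric facts
  have hMpos : 1 ≤ M := Nat.one_le_pow _ _ (by positivity)
  have hhpos : 1 ≤ h := by omega
  have hKq : (0:ℚ) < (K:ℚ) := by
    have : 0 < K := by positivity
    exact_mod_cast this
  have hhq : (0:ℚ) < (h:ℚ) := by exact_mod_cast hhpos
  have hK2nat : 4*N^2*(H+1) ≤ K^2 := by
    have hs : H + 1 ≤ (Nat.sqrt H + 1)^2 := by
      have := Nat.lt_succ_sqrt H
      nlinarith [this]
    calc 4*N^2*(H+1) ≤ 4*N^2*((Nat.sqrt H + 1)^2) := by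
          exact Nat.mul_le_mul_left _ hs
      _ = (2*N*(Nat.sqrt H + 1))^2 := by ring
  have hK2 : (3:ℚ) * (N:ℚ)^2 * (H:ℚ) < (K:ℚ)^2 := by
    have hNq : (2:ℚ) ≤ (N:ℚ) := by exact_mod_cast hN
    have h2 : (4:ℚ)*(N:ℚ)^2*((H:ℚ)+1) ≤ (K:ℚ)^2 := by exact_mod_cast hK2nat
    nlinarith [h2, hNq]
  have hK4 : (4:ℕ) ≤ K := by
    calc 4 = 2*2*1 := by norm_num
      _ ≤ 2*N*(Nat.sqrt H + 1) := by
          apply Nat.mul_le_mul <;> omega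
  have hK4q : (4:ℚ) ≤ (K:ℚ) := by exact_mod_cast hK4
  -- top coordinate
  obtain ⟨i0, hi0⟩ : ∃ i0, (a i0).natAbs = h := by
    obtain ⟨b, _, hb⟩ := Finset.exists_mem_eq_sup Finset.univ
      Finset.univ_nonempty (fun i => (a i).natAbs)
    exact ⟨b, by rw [← hah, hb]⟩
  have hA0 : a i0 ≠ 0 := by
    intro hcontra
    rw [hcontra] at hi0
    simp at hi0
    omega
  set ac : Fin N → ℚ := fun i => (a i : ℚ) with hac
  have hAq0 : ac i0 ≠ 0 := Int.cast_ne_zero.2 hA0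
  have habs_a : ∀ i, |ac i| ≤ (h:ℚ) := by
    intro i
    rw [hac]
    simp only []
    rw [← natAbsQ]
    exact Nat.cast_le.2 (hah ▸ Finset.le_sup (f := fun i => (a i).natAbs)
      (Finset.mem_univ i))
  have habs_A : |ac i0| = (h:ℚ) := by
    rw [hac]; simp only []; rw [← natAbsQ, hi0]
  have hgabs : ∀ i j, |gq i j| ≤ (H:ℚ) := by
    intro i j
    rw [hgq]; simp only []; rw [← natAbsQ]
    exact Nat.cast_le.2 (hgH i j)
  -- pigeonhole
  obtain ⟨m, z, hm1, hmM, hzi0, hzbound⟩ :=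
    pigeonhole_approx a i0 K M (by positivity) hM hA0
  have hmh : m < h := by omega
  set zc : Fin N → ℚ := fun i => (z i : ℚ) with hzc
  set τ : ℚ := (m:ℚ) / (ac i0) with hτ
  set r : Fin N → ℚ := fun i => zc i - τ * ac i with hr
  have hrabs : ∀ i, |r i| ≤ 1/K := hzbound
  have hri0 : r i0 = 0 := by
    have hz0 : zc i0 = (m:ℚ) := by
      simp only [hzc, hzi0]
      push_cast
      ring
    simp only [hr, hz0, hτ]
    rw [div_mul_cancel₀ _ hAq0]
    ring
  have hτabs : |τ| * (h:ℚ) = (m:ℚ) := by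
    rw [hτ, abs_div, habs_A, abs_of_nonneg (by positivity : (0:ℚ) ≤ (m:ℚ))]
    field_simp
  have zdec : zc = fun i => τ * ac i + 1 * r i := by
    funext i; rw [hr]; ring
  -- bilinear values
  have Faa : Bq gq ac ac = 0 := ha.1
  set β : ℚ := Bq gq ac r with hβdef
  set φ : ℚ := Bq gq r r with hφdef
  have hBsym : ∀ x y, Bq gq x y = Bq gq y x := fun x y =>
    Bq_comm (fun i j => by rw [hgq]; exact_mod_cast congrArg _ (hsym i j)) x y
  have eR : ∀ y, Bq gq y zc = τ * Bq gq y ac + 1 * Bq gq y r := by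
    intro y
    have e := Bq_comb_right gq τ 1 ac r y
    rw [← zdec] at e
    exact e
  have eL : ∀ y, Bq gq zc y = τ * Bq gq ac y + 1 * Bq gq r y := by
    intro y
    have e := Bq_comb_left gq τ 1 ac r y
    rw [← zdec] at e
    exact e
  have Baz : Bq gq ac zc = β := by
    rw [eR ac, Faa, ← hβdef]; ring
  have Brz : Bq gq r zc = τ * β + φ := by
    rw [eR r, hBsym r ac, ← hβdef, ← hφdef]; ring
  have Bzz : Bq gq zc zc = 2*τ*β + φ := by
    rw [eL zc, Baz, eR r, hBsym r ac, ← hβdef, ← hφdef]; ring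
  -- the reflected integer vector
  set bzz : ℤ := ∑ i, ∑ j, g i j * z i * z j with hbzz
  set baz : ℤ := ∑ i, ∑ j, g i j * a i * z j with hbaz
  have hbzzc : (bzz : ℚ) = Bq gq zc zc := by
    rw [hbzz, Bq]; push_cast; rfl
  have hbazc : (baz : ℚ) = Bq gq ac zc := by
    rw [hbaz, Bq]; push_cast; rfl
  set b : Fin N → ℤ := fun i => bzz * a i - 2 * baz * z i with hb
  have hbc : ∀ i, (b i : ℚ) = φ * ac i - 2 * β * r i := by
    intro i
    have e1 : (b i : ℚ) = (bzz:ℚ) * ac i - 2 * (baz:ℚ) * zc i := by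
      rw [hb]; push_cast; ring
    rw [e1, hbzzc, hbazc, Bzz, Baz, congrFun zdec i]
    ring
  -- bounds on β and φ
  have hβb : |β| ≤ (N:ℚ)^2 * (H:ℚ) * (h:ℚ) * (1/K) := by
    rw [hβdef]
    have := abs_Bq_le hgabs habs_a hrabs (by positivity) (by positivity) (by positivity)
    calc |Bq gq ac r| ≤ (N:ℚ)^2 * (H:ℚ) * (h:ℚ) * (1/K) := this
      _ = _ := by ring
  have hφb : |φ| ≤ (N:ℚ)^2 * (H:ℚ) * (1/K) * (1/K) := by
    rw [hφdef]
    exact abs_Bq_le hgabs hrabs hrabs (by positivity) (by positivity) (by positivity)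
  by_cases hbne : b = 0
  -- CASE 2 : b = 0
  · have hbc0 : ∀ i, φ * ac i - 2 * β * r i = 0 := fun i => by
      rw [← hbc i, hbne]; simp
    have hφ0 : φ = 0 := by
      have := hbc0 i0
      rw [hri0] at this
      have h2 : φ * ac i0 = 0 := by linarith
      rcases mul_eq_zero.1 h2 with h3 | h3
      · exact h3
      · exact absurd h3 hAq0
    have hrne : ∃ i, r i ≠ 0 := by
      by_contra hc
      push_neg at hc
      have hzeq : ∀ i, (a i0) * z i = (m:ℤ) * a i := by
        intro i
        have h1 : r i = 0 := hc i
        simp only [hr] at h1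
        have h2 : zc i = τ * ac i := by linarith
        have h3 : ac i0 * zc i = (m:ℚ) * ac i := by
          rw [h2, hτ]; field_simp
        simp only [hzc, hac] at h3
        exact_mod_cast h3
      have hdvd : (a i0) ∣ (m:ℤ) := by
        have hd : (a i0) ∣ Finset.univ.gcd (fun i => (m:ℤ) * a i) :=
          Finset.dvd_gcd fun i _ => ⟨z i, (hzeq i).symm⟩
        rw [Finset.gcd_mul_left, hprim, mul_one] at hd
        rwa [Int.normalize_of_nonneg (by positivity)] at hd
      have habsdvd : (|a i0| : ℤ) ∣ (m:ℤ) := (abs_dvd _ _).2 hdvd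
      have hle : (|a i0| : ℤ) ≤ (m:ℤ) := Int.le_of_dvd (by exact_mod_cast hm1) habsdvd
      have h7 : ((a i0).natAbs : ℤ) ≤ (m:ℤ) := by
        rw [Int.natCast_natAbs]; exact hle
      rw [hi0] at h7
      have : h ≤ m := by exact_mod_cast h7
      omega
    obtain ⟨i1, hi1⟩ := hrne
    have hβ0 : β = 0 := by
      have := hbc0 i1
      rw [hφ0] at this
      have h2 : β * r i1 = 0 := by linarith
      rcases mul_eq_zero.1 h2 with h3 | h3
      · exact h3
      · exact absurd h3 hi1
    have hBzz0 : Bq gq zc zc = 0 := by rw [Bzz, hβ0, hφ0]; ring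
    by_cases hzns : ∃ y, Bq gq zc y ≠ 0
    -- CASE 2a : z itself is a nonsingular zero
    · have zS : Szero g z := ⟨hBzz0, hzns⟩
      have hminz := hmin z zS
      have hzb : ∀ i, (z i).natAbs ≤ M := by
        intro i
        have h1 : |zc i| ≤ (m:ℚ) + 1/K := by
          calc |zc i| = |τ * ac i + r i| := by rw [congrFun zdec i]; ring_nf
            _ ≤ |τ * ac i| + |r i| := abs_add_le _ _
            _ ≤ |τ| * (h:ℚ) + 1/K := by
                rw [abs_mul]
                gcongr
                · exact habs_a i
                · exact hrabs i
            _ = (m:ℚ) + 1/K := by rw [hτabs]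
        have h2 : |zc i| < (M:ℚ) + 1 := by
          have : (1:ℚ)/K < 1 := by
            rw [div_lt_one hKq]; linarith
          have hmq : (m:ℚ) ≤ (M:ℚ) := by exact_mod_cast hmM
          linarith
        have h3 : ((z i).natAbs : ℚ) < (M:ℚ) + 1 := by
          rw [natAbsQ]; exact h2
        have h4 : ((z i).natAbs : ℚ) < ((M + 1 : ℕ):ℚ) := by push_cast; linarith
        have := Nat.cast_lt (α := ℚ) |>.1 h4
        omega
      have : Finset.univ.sup (fun i => (z i).natAbs) ≤ M :=
        Finset.sup_le fun i _ => hzb i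
      omega
    -- CASE 2b : z is in the radical; use Bezout combination
    · push_neg at hzns
      obtain ⟨p, q, hp0, hpq, hq⟩ := bezout_small (a i0) (m:ℤ) hA0 (by exact_mod_cast hm1)
      set x : Fin N → ℤ := fun i => p * a i + q * z i with hx
      set xc : Fin N → ℚ := fun i => (x i : ℚ) with hxc
      have xdec : xc = fun i => (p:ℚ) * ac i + (q:ℚ) * zc i := by
        funext i; rw [hxc, hx]; push_cast; ring
      have hzca : Bq gq ac zc = 0 := by rw [hBsym ac zc]; exact hzns ac
      have hFx : Bq gq xc xc = 0 := by
        rw [xdec, Bq_comb_left, Bq_comb_right, Bq_comb_right, Faa, hzca, hzns ac, hzns zc]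
        ring
      have hnsx : ∃ y, Bq gq xc y ≠ 0 := by
        obtain ⟨y0, hy0⟩ := ha.2
        refine ⟨y0, ?_⟩
        rw [xdec, Bq_comb_left, hzns y0, mul_zero, add_zero]
        exact mul_ne_zero (Int.cast_ne_zero.2 hp0) hy0
      have xS : Szero g x := ⟨hFx, hnsx⟩
      have hminx := hmin x xS
      obtain ⟨i2, _, hi2⟩ := Finset.exists_mem_eq_sup Finset.univ
        Finset.univ_nonempty (fun i => (x i).natAbs)
      set dI : ℤ := (Int.gcd (a i0) (m:ℤ) : ℤ) with hdI
      have hdIm : dI ≤ (m:ℤ) := Int.le_of_dvd (by exact_mod_cast hm1) (Int.gcd_dvd_right _ _)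
      have hdInn : (0:ℤ) ≤ dI := by rw [hdI]; positivity
      have hpqτ : (p:ℚ) + (q:ℚ) * τ = (dI:ℚ) / (ac i0) := by
        rw [hτ, hac]
        field_simp
        push_cast [← hpq]
        ring
      have hxc2 : xc i2 = ((p:ℚ) + (q:ℚ)*τ) * ac i2 + (q:ℚ) * r i2 := by
        rw [congrFun xdec i2, congrFun zdec i2]
        ring
      have hxb : |xc i2| ≤ (M:ℚ) + (h:ℚ)/2 := by
        rw [hxc2]
        calc |((p:ℚ) + (q:ℚ)*τ) * ac i2 + (q:ℚ) * r i2|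
            ≤ |((p:ℚ) + (q:ℚ)*τ)| * |ac i2| + |(q:ℚ)| * |r i2| := by
              calc _ ≤ |((p:ℚ) + (q:ℚ)*τ) * ac i2| + |(q:ℚ) * r i2| := abs_add_le _ _
                _ = _ := by rw [abs_mul, abs_mul]
          _ ≤ ((dI:ℚ)/(h:ℚ)) * (h:ℚ) + (2*(h:ℚ)) * (1/K) := by
              have e1 : |((p:ℚ) + (q:ℚ)*τ)| = (dI:ℚ)/(h:ℚ) := by
                rw [hpqτ, abs_div, habs_A, abs_of_nonneg (by exact_mod_cast hdInn : (0:ℚ) ≤ (dI:ℚ))]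
              have e2 : |(q:ℚ)| ≤ 2*(h:ℚ) := by
                have h5 : ((|q|:ℤ):ℚ) ≤ (((2*|a i0|):ℤ):ℚ) := Int.cast_le.2 hq
                push_cast at h5
                have hACeq : |((a i0 : ℤ) : ℚ)| = (h:ℚ) := habs_A
                rw [hACeq] at h5
                exact h5
              rw [e1]
              have t2 : |(q:ℚ)| * |r i2| ≤ (2*(h:ℚ)) * (1/K) :=
                mul_le_mul e2 (hrabs i2) (abs_nonneg _) (by positivity)
              have t1 : ((dI:ℚ)/(h:ℚ)) * |ac i2| ≤ ((dI:ℚ)/(h:ℚ)) * (h:ℚ) := by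
                apply mul_le_mul_of_nonneg_left (habs_a i2)
                exact div_nonneg (by exact_mod_cast hdInn) (le_of_lt hhq)
              linarith
          _ ≤ (M:ℚ) + (h:ℚ)/2 := by
              have e3 : ((dI:ℚ)/(h:ℚ)) * (h:ℚ) = (dI:ℚ) := by field_simp
              have e4 : (dI:ℚ) ≤ (M:ℚ) := by
                have : (dI:ℚ) ≤ (m:ℚ) := by exact_mod_cast hdIm
                have h6 : (m:ℚ) ≤ (M:ℚ) := by exact_mod_cast hmM
                linarith
              have e5 : (2*(h:ℚ)) * (1/K) ≤ (h:ℚ)/2 := by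
                rw [mul_one_div]
                rw [div_le_div_iff₀ hKq (by norm_num : (0:ℚ) < 2)]
                nlinarith [hK4q, hhq]
              linarith
      have hcast : (h:ℚ) ≤ |xc i2| := by
        have h1 : h ≤ (x i2).natAbs := by rw [← hi2]; exact hminx
        calc (h:ℚ) ≤ ((x i2).natAbs : ℚ) := by exact_mod_cast h1
          _ = |xc i2| := natAbsQ _
      have hMq : ((2*M + 4 : ℕ):ℚ) ≤ (h:ℚ) := by exact_mod_cast hcon'
      push_cast at hMq
      linarith [hxb, hcast, hMq]
  -- CASE 1 : b ≠ 0, reflected vector is a smaller nonsingular zero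
  · have bdec : (fun i => (b i : ℚ)) = fun i => φ * ac i + (-(2*β)) * r i := by
      funext i; rw [hbc i]; ring
    have hFb : Bq gq (fun i => (b i:ℚ)) (fun i => (b i:ℚ)) = 0 := by
      rw [bdec]
      rw [Bq_comb_left, Bq_comb_right, Bq_comb_right]
      rw [Faa, hBsym r ac, ← hβdef, ← hφdef]
      ring
    have hnsb : ∃ y, Bq gq (fun i => (b i:ℚ)) y ≠ 0 := by
      by_contra hns
      push_neg at hns
      have hβ0 : β = 0 := by
        have h1 := hns ac
        rw [bdec, Bq_comb_left, Faa, hBsym r ac, ← hβdef] at h1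
        have h2 : β * β = 0 := by linarith
        exact mul_self_eq_zero.1 h2
      have hφ0 : φ ≠ 0 := by
        intro hφ0
        apply hbne
        funext i
        have := hbc i
        rw [hβ0, hφ0] at this
        simp at this
        exact_mod_cast this
      obtain ⟨y0, hy0⟩ := ha.2
      have h1 := hns y0
      rw [bdec, Bq_comb_left, hβ0] at h1
      simp at h1
      rcases h1 with h1 | h1
      · exact hφ0 h1
      · exact hy0 h1
    have bS : Szero g b := ⟨hFb, hnsb⟩
    have hminb := hmin b bS
    have hbni : ∀ i, (b i).natAbs < h := by
      intro i
      have h1 : |(b i : ℚ)| ≤ 3*(N:ℚ)^2*(H:ℚ)*(h:ℚ)/(K:ℚ)^2 := by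
        rw [hbc i]
        calc |φ * ac i - 2*β*r i| ≤ |φ| * |ac i| + 2 * |β| * |r i| := by
              calc _ ≤ |φ * ac i| + |2 * β * r i| := abs_sub _ _
                _ = |φ| * |ac i| + 2 * |β| * |r i| := by
                    rw [abs_mul, abs_mul, abs_mul]
                    norm_num
          _ ≤ ((N:ℚ)^2*(H:ℚ)*(1/K)*(1/K))*(h:ℚ) + 2*((N:ℚ)^2*(H:ℚ)*(h:ℚ)*(1/K))*(1/K) := by
              have t1 : |φ| * |ac i| ≤ ((N:ℚ)^2*(H:ℚ)*(1/K)*(1/K))*(h:ℚ) :=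
                mul_le_mul hφb (habs_a i) (abs_nonneg _) (by positivity)
              have t2 : |β| * |r i| ≤ ((N:ℚ)^2*(H:ℚ)*(h:ℚ)*(1/K))*(1/K) :=
                mul_le_mul hβb (hrabs i) (abs_nonneg _) (by positivity)
              linarith
          _ = 3*(N:ℚ)^2*(H:ℚ)*(h:ℚ)/(K:ℚ)^2 := by
              field_simp
              ring
      have h2 : |(b i : ℚ)| < (h:ℚ) := by
        apply lt_of_le_of_lt h1
        rw [div_lt_iff₀ (by positivity)]
        nlinarith [hK2, hhq]
      have h3 : ((b i).natAbs : ℚ) < (h:ℚ) := by rw [natAbsQ]; exact h2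
      exact_mod_cast h3
    have : Finset.univ.sup (fun i => (b i).natAbs) < h :=
      (Finset.sup_lt_iff (by simp only [bot_eq_zero]; omega : (⊥:ℕ) < h)).2 fun i _ => hbni i
    omega

lemma Bq_matsmul {N : ℕ} (f : Fin N → Fin N → ℚ) (c : ℚ) (u v : Fin N → ℚ) :
    Bq (fun i j => c * f i j) u v = c * Bq f u v := by
  simp only [Bq, Finset.mul_sum]
  exact Finset.sum_congr rfl fun i _ =>
    Finset.sum_congr rfl fun j _ => by ring

end CasselsAux

open CasselsAux in
/-- **Cassels' bound for nonsingular zeros.** For every `N ≥ 2` there is a constant `C_N` such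
that: if a quadratic form `F` over ℚ in `N` variables has a nonsingular zero (a zero `x` with
`F(x,y) ≠ 0` for some `y`), then it has such a zero `x` with `H(x) ≤ C_N · H(F)^((N−1)/2)`. -/
theorem small_nonsingular_zero (N : ℕ) (hN : 2 ≤ N) :
    ∃ C : ℝ, 0 < C ∧
      ∀ (f : Fin N → Fin N → ℚ), (∀ i j, f i j = f j i) →
      (∃ x : Fin N → ℚ, (∑ i, ∑ j, f i j * x i * x j = 0) ∧
        ∃ y : Fin N → ℚ, ∑ i, ∑ j, f i j * x i * y j ≠ 0) →
      ∃ x : Fin N → ℚ, (∑ i, ∑ j, f i j * x i * x j = 0) ∧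
        (∃ y : Fin N → ℚ, ∑ i, ∑ j, f i j * x i * y j ≠ 0) ∧
        ((projHeight x : ℕ) : ℝ) ≤
          C * ((projHeight fun p : Fin N × Fin N => f p.1 p.2 : ℕ) : ℝ) ^ (((N : ℝ) - 1) / 2) := by
  classical
  refine ⟨5 * (4*(N:ℝ))^(N-1), by positivity, ?_⟩
  intro f hfsym hex
  obtain ⟨x0, hx0F, y0, hy0⟩ := hex
  -- the coefficient vector of f is nonzero
  have hfne : (fun p : Fin N × Fin N => f p.1 p.2) ≠ 0 := by
    intro hf0
    apply hy0
    refine Finset.sum_eq_zero fun i _ => Finset.sum_eq_zero fun j _ => ?_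
    have : f i j = 0 := congrFun hf0 (i, j)
    rw [this]; ring
  -- primitive integral model of f
  obtain ⟨w, ⟨c, hc, hwc⟩, hwgcd, hwH⟩ := projHeight_spec (fun p : Fin N × Fin N => f p.1 p.2) hfne
  set g : Fin N → Fin N → ℤ := fun i j => w (i, j) with hgdef
  set H : ℕ := Finset.univ.sup fun p : Fin N × Fin N => (w p).natAbs with hHdef
  have hgc : ∀ i j, ((g i j : ℤ) : ℚ) = c * f i j := fun i j => hwc (i, j)
  have hgq : (fun i j => ((g i j : ℤ) : ℚ)) = fun i j => c * f i j := by
    funext i j; exact hgc i j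
  have hgsym : ∀ i j, g i j = g j i := by
    intro i j
    have : ((g i j : ℤ) : ℚ) = ((g j i : ℤ) : ℚ) := by
      rw [hgc, hgc, hfsym i j]
    exact_mod_cast this
  have hH1 : 1 ≤ H := one_le_sup_natAbs hwgcd
  have hgH : ∀ i j, (g i j).natAbs ≤ H := fun i j =>
    Finset.le_sup (f := fun p : Fin N × Fin N => (w p).natAbs) (Finset.mem_univ (i, j))
  have hBfg : ∀ u v : Fin N → ℚ, Bq (fun i j => ((g i j : ℤ) : ℚ)) u v = c * Bq f u v := by
    intro u v
    rw [hgq, Bq_matsmul]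
  -- clear denominators of the given nonsingular zero
  have hx0ne : x0 ≠ 0 := by
    intro hx00
    apply hy0
    refine Finset.sum_eq_zero fun i _ => Finset.sum_eq_zero fun j _ => ?_
    have : x0 i = 0 := congrFun hx00 i
    rw [this]; ring
  obtain ⟨X, ⟨cx, hcx, hXc⟩, _, _⟩ := projHeight_spec x0 hx0ne
  have hXdec : (fun i => ((X i : ℤ) : ℚ)) = fun i => cx * x0 i := by
    funext i; exact hXc i
  have hSX : Szero g X := by
    constructor
    · rw [hBfg, hXdec, Bq_smul_left, Bq_smul_right]
      have : Bq f x0 x0 = 0 := hx0F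
      rw [this]; ring
    · refine ⟨y0, ?_⟩
      rw [hBfg, hXdec, Bq_smul_left]
      have : Bq f x0 y0 ≠ 0 := hy0
      exact mul_ne_zero hc (mul_ne_zero hcx this)
  -- apply the descent
  obtain ⟨a, haS, hab⟩ := descent hN g hgsym H hH1 hgH ⟨X, hSX⟩
  set ac : Fin N → ℚ := fun i => (a i : ℚ) with hac
  have hane : a ≠ 0 := by
    rintro rfl
    obtain ⟨y, hy⟩ := haS.2
    apply hy
    have : (fun i => ((0:Fin N → ℤ) i : ℚ)) = (0 : Fin N → ℚ) := by funext i; simp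
    rw [this, Bq_zero_left]
  refine ⟨ac, ?_, ?_, ?_⟩
  · have h1 := haS.1
    rw [hBfg] at h1
    rcases mul_eq_zero.1 h1 with h2 | h2
    · exact absurd h2 hc
    · exact h2
  · obtain ⟨y, hy⟩ := haS.2
    refine ⟨y, fun hzero => hy ?_⟩
    rw [hBfg]
    have : Bq f ac y = 0 := hzero
    rw [this]; ring
  · -- height estimate
    have hph : projHeight ac ≤ Finset.univ.sup fun i => (a i).natAbs :=
      projHeight_le_of_int ac a 1 one_ne_zero (fun i => by rw [one_mul]) hane
    have hphb : projHeight ac ≤ 2 * (2*N*(Nat.sqrt H + 1))^(N-1) + 3 := le_trans hph hab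
    have hHeq : (projHeight fun p : Fin N × Fin N => f p.1 p.2) = H := hwH
    rw [hHeq]
    -- real arithmetic
    have hHr1 : (1:ℝ) ≤ (H:ℝ) := by exact_mod_cast hH1
    have hHr0 : (0:ℝ) ≤ (H:ℝ) := by linarith
    set e : ℝ := ((N : ℝ) - 1) / 2 with he
    have hsqrt : ((Nat.sqrt H : ℕ) : ℝ) + 1 ≤ 2 * Real.sqrt (H:ℝ) := by
      have h1 : ((Nat.sqrt H : ℕ) : ℝ) ≤ Real.sqrt (H:ℝ) := by
        rw [show ((Nat.sqrt H : ℕ) : ℝ) = Real.sqrt (((Nat.sqrt H)^2 : ℕ) : ℝ) by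
          push_cast
          rw [Real.sqrt_sq (by positivity)]]
        apply Real.sqrt_le_sqrt
        exact_mod_cast Nat.sqrt_le' H
      have h2 : (1:ℝ) ≤ Real.sqrt (H:ℝ) := by
        rw [show (1:ℝ) = Real.sqrt 1 by rw [Real.sqrt_one]]
        exact Real.sqrt_le_sqrt hHr1
      linarith
    have hKbound : ((2*N*(Nat.sqrt H + 1) : ℕ) : ℝ) ≤ 4*(N:ℝ) * Real.sqrt (H:ℝ) := by
      push_cast
      have hN0 : (0:ℝ) ≤ 2*(N:ℝ) := by positivity
      nlinarith [hsqrt]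
    have hpow : (((2*N*(Nat.sqrt H + 1))^(N-1) : ℕ) : ℝ)
        ≤ (4*(N:ℝ))^(N-1) * (H:ℝ)^e := by
      have hsq : (Real.sqrt (H:ℝ))^(N-1) = (H:ℝ)^e := by
        rw [Real.sqrt_eq_rpow, ← Real.rpow_natCast ((H:ℝ)^((1:ℝ)/2)) (N-1),
          ← Real.rpow_mul hHr0]
        congr 1
        rw [he]
        have : ((N - 1 : ℕ) : ℝ) = (N:ℝ) - 1 := by
          have : 1 ≤ N := by omega
          push_cast [Nat.cast_sub this]
          ring
        rw [this]
        ring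
      calc (((2*N*(Nat.sqrt H + 1))^(N-1) : ℕ) : ℝ)
          = (((2*N*(Nat.sqrt H + 1) : ℕ) : ℝ))^(N-1) := by push_cast; ring
        _ ≤ (4*(N:ℝ) * Real.sqrt (H:ℝ))^(N-1) := by
            apply pow_le_pow_left₀ (by positivity) hKbound
        _ = (4*(N:ℝ))^(N-1) * (Real.sqrt (H:ℝ))^(N-1) := by rw [mul_pow]
        _ = (4*(N:ℝ))^(N-1) * (H:ℝ)^e := by rw [hsq]
    have hrpow1 : (1:ℝ) ≤ (H:ℝ)^e := by
      apply Real.one_le_rpow hHr1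
      rw [he]
      have : (2:ℝ) ≤ (N:ℝ) := by exact_mod_cast hN
      linarith
    have hpow1 : (1:ℝ) ≤ (4*(N:ℝ))^(N-1) := by
      have h4N : (1:ℝ) ≤ 4*(N:ℝ) := by
        have : (2:ℝ) ≤ (N:ℝ) := by exact_mod_cast hN
        linarith
      exact one_le_pow₀ h4N
    calc ((projHeight ac : ℕ) : ℝ) ≤ ((2 * (2*N*(Nat.sqrt H + 1))^(N-1) + 3 : ℕ) : ℝ) := by
          exact_mod_cast hphb
      _ = 2 * (((2*N*(Nat.sqrt H + 1))^(N-1) : ℕ) : ℝ) + 3 := by push_cast; ring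
      _ ≤ 2 * ((4*(N:ℝ))^(N-1) * (H:ℝ)^e) + 3 := by linarith [hpow]
      _ ≤ 5 * (4*(N:ℝ))^(N-1) * (H:ℝ)^e := by nlinarith [hrpow1, hpow1]
      _ = 5 * (4*(N:ℝ))^(N-1) * ((H : ℕ) : ℝ)^e := by norm_num
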